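/- arXiv:2505.21460 — 2 statements merged into one kernel-verified Lean document; each statement's English description precedes it below -/
import Mathlib

section
/- Fix a convex set $\mathcal{P} \subseteq \mathbb{R}^d$, a differentiable convex function $R : \mathcal{P} \to \mathbb{R}$, finitely supported distributions $\mathbf{x}_1, \ldots, \mathbf{x}_T$ on $\mathcal{P}$, and outcomes $y_1, \ldots, y_T \in \mathcal{P}$. Define loss functions $\ell_t(p) = D_R(y_t|p)$. Then the full swap regret equals the $D_R$-calibration error: $\sup_{\pi : \mathcal{P} \to \mathcal{P}} \sum_{t=1}^T \sum_{p} \mathbf{x}_t(p)(\ell_t(p) - \ell_t(\pi(p))) = \sum_{p} \left(\sum_{t=1}^T \mathbf{x}_t(p)\right) D_R(\nu_p | p)$, where $\nu_p = \frac{\sum_t \mathbf{x}_t(p) y_t}{\sum_t \mathbf{x}_t(p)}$ for each $p$ with $\sum_t \mathbf{x}_t(p) > 0$. -/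
open scoped InnerProductSpace BigOperators

noncomputable section

/-- With losses `ℓ_t(p) = D_R(y_t|p)`, the full swap regret of the distributions
`x_1, …, x_T` (supported on the finite set `S ⊆ P`) equals the `D_R`-calibration error
`∑_p (∑_t x_t(p)) · D_R(ν_p | p)`, where `ν_p` is the conditional average outcome.
We express the supremum over swap functions `π : P → P` via `IsGreatest`. -/
theorem full_swap_regret_eq_calibration_error {d T : ℕ}
    (P : Set (EuclideanSpace ℝ (Fin d))) (hPconv : Convex ℝ P)
    (R : EuclideanSpace ℝ (Fin d) → ℝ)
    (g : EuclideanSpace ℝ (Fin d) → EuclideanSpace ℝ (Fin d))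
    (hconv : ∀ p ∈ P, ∀ y ∈ P, R p + ⟪g p, y - p⟫_ℝ ≤ R y)
    (D : EuclideanSpace ℝ (Fin d) → EuclideanSpace ℝ (Fin d) → ℝ)
    (hD : ∀ y q, D y q = R y - R q - ⟪g q, y - q⟫_ℝ)
    (S : Finset (EuclideanSpace ℝ (Fin d))) (hS : ↑S ⊆ P)
    (x : Fin T → EuclideanSpace ℝ (Fin d) → ℝ)
    (hx : ∀ t, ∀ p ∈ S, 0 ≤ x t p) (hx1 : ∀ t, ∑ p ∈ S, x t p = 1)
    (y : Fin T → EuclideanSpace ℝ (Fin d)) (hy : ∀ t, y t ∈ P)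
    (ν : EuclideanSpace ℝ (Fin d) → EuclideanSpace ℝ (Fin d))
    (hνP : ∀ p ∈ S, ν p ∈ P)
    (hν : ∀ p ∈ S, (0 < ∑ t, x t p) →
      (∑ t, x t p) • ν p = ∑ t, x t p • y t) :
    IsGreatest
      {r : ℝ | ∃ π : EuclideanSpace ℝ (Fin d) → EuclideanSpace ℝ (Fin d),
        (∀ p ∈ S, π p ∈ P) ∧
        r = ∑ t, ∑ p ∈ S, x t p * (D (y t) p - D (y t) (π p))}
      (∑ p ∈ S, (∑ t, x t p) * D (ν p) p) := by

  have hkey : ∀ p ∈ S, ∀ q, ∑ t, x t p * (D (y t) p - D (y t) q)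
      = (∑ t, x t p) * (D (ν p) p - D (ν p) q) := by
    intro p hp q
    by_cases hm : 0 < ∑ t, x t p
    · have hnu := hν p hp hm
      have hsum : ∑ t, x t p * ⟪g q - g p, y t⟫_ℝ
          = (∑ t, x t p) * ⟪g q - g p, ν p⟫_ℝ := by
        rw [← real_inner_smul_right, hnu, inner_sum]
        exact Finset.sum_congr rfl fun t _ => (real_inner_smul_right _ _ _).symm
      have hexp : ∀ t : Fin T, x t p * (D (y t) p - D (y t) q)
          = x t p * ((R q - R p + ⟪g p, p⟫_ℝ - ⟪g q, q⟫_ℝ) + ⟪g q - g p, y t⟫_ℝ) := by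
        intro t
        rw [hD, hD]
        simp only [inner_sub_left, inner_sub_right]
        ring
      calc ∑ t, x t p * (D (y t) p - D (y t) q)
          = ∑ t, x t p * ((R q - R p + ⟪g p, p⟫_ℝ - ⟪g q, q⟫_ℝ) + ⟪g q - g p, y t⟫_ℝ) :=
            Finset.sum_congr rfl fun t _ => hexp t
        _ = (∑ t, x t p) * (R q - R p + ⟪g p, p⟫_ℝ - ⟪g q, q⟫_ℝ)
              + ∑ t, x t p * ⟪g q - g p, y t⟫_ℝ := by
            rw [Finset.sum_mul]
            rw [← Finset.sum_add_distrib]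
            exact Finset.sum_congr rfl fun t _ => by ring
        _ = (∑ t, x t p) * (R q - R p + ⟪g p, p⟫_ℝ - ⟪g q, q⟫_ℝ)
              + (∑ t, x t p) * ⟪g q - g p, ν p⟫_ℝ := by rw [hsum]
        _ = (∑ t, x t p) * (D (ν p) p - D (ν p) q) := by
            rw [hD, hD]
            simp only [inner_sub_left, inner_sub_right]
            ring
    · have hm0 : ∑ t, x t p = 0 :=
        le_antisymm (not_lt.mp hm) (Finset.sum_nonneg fun t _ => hx t p hp)
      have hz : ∀ t : Fin T, x t p = 0 := fun t =>
        (Finset.sum_eq_zero_iff_of_nonneg (fun t _ => hx t p hp)).mp hm0 t (Finset.mem_univ t)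
      simp [hz, hm0]
  constructor
  · refine ⟨ν, hνP, ?_⟩
    rw [Finset.sum_comm]
    refine (Finset.sum_congr rfl fun p hp => ?_).symm
    rw [hkey p hp (ν p)]
    have : D (ν p) (ν p) = 0 := by simp [hD]
    rw [this]
    ring
  · rintro r ⟨π, hπ, rfl⟩
    rw [Finset.sum_comm]
    refine Finset.sum_le_sum fun p hp => ?_
    rw [hkey p hp (π p)]
    have hm : 0 ≤ ∑ t, x t p := Finset.sum_nonneg fun t _ => hx t p hp
    have hDpos : 0 ≤ D (ν p) (π p) := by
      have := hconv (π p) (hπ p hp) (ν p) (hνP p hp)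
      rw [hD]; linarith
    nlinarith
end
end

section
/- Suppose for each time $t \in [T]$ a finitely supported distribution $\mathbf{x}_t$ on a set $\mathcal{P} \subseteq \mathbb{R}^d$ is given together with an outcome $y_t \in \mathbb{R}^d$, and define the linear-loss full swap regret with respect to a finite action set $\mathcal{P}' \subseteq \mathbb{R}^d$ and best-response map $\mathsf{BR}(p) \in \arg\min_{q \in \mathcal{P}'} \langle q, p \rangle$. Let $\mathbf{x}'_t$ be the pushforward of $\mathbf{x}_t$ under $\mathsf{BR}$. Then for any norm $\|\cdot\|$ with dual norm $\|\cdot\|_\star$: $\sup_{\pi : \mathcal{P}' \to \mathcal{P}'} \sum_{t=1}^T \sum_{p' \in \mathcal{P}'} \mathbf{x}'_t(p') \langle y_t, p' - \pi(p') \rangle \leq \mathrm{diam}_{\|\cdot\|_\star}(\mathcal{P}') \cdot \sum_{p \in \mathcal{P}} \left(\sum_{t=1}^T \mathbf{x}_t(p)\right)\|\nu_p - p\|$, where $\nu_p = \frac{\sum_t \mathbf{x}_t(p) y_t}{\sum_t \mathbf{x}_t(p)}$. -/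
open scoped InnerProductSpace BigOperators

noncomputable section

/-- Best-responding to calibrated forecasts yields small linear-loss full swap
regret: for the pushforward distributions under the best-response map `BR`, the swap regret
against any swap function `π : P' → P'` is at most
`diam_{‖·‖⋆}(P') · ∑_p (∑_t x_t(p)) ‖ν_p - p‖`.
Here `N` is a norm on `ℝ^d` and `Nstar` its dual norm (given as a least upper bound). -/
theorem swap_regret_le_diam_mul_calibration {d T : ℕ}
    (P : Set (EuclideanSpace ℝ (Fin d)))
    (S : Finset (EuclideanSpace ℝ (Fin d))) (hS : ↑S ⊆ P)
    (x : Fin T → EuclideanSpace ℝ (Fin d) → ℝ)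
    (hx : ∀ t, ∀ p ∈ S, 0 ≤ x t p) (hx1 : ∀ t, ∑ p ∈ S, x t p = 1)
    (y : Fin T → EuclideanSpace ℝ (Fin d))
    (N Nstar : EuclideanSpace ℝ (Fin d) → ℝ)
    (hN_add : ∀ a b, N (a + b) ≤ N a + N b)
    (hN_smul : ∀ (c : ℝ) a, N (c • a) = |c| * N a)
    (hN_def : ∀ a, N a = 0 → a = 0)
    (hNstar : ∀ v, IsLUB {r : ℝ | ∃ s, N s ≤ 1 ∧ r = ⟪s, v⟫_ℝ} (Nstar v))
    (P' : Finset (EuclideanSpace ℝ (Fin d))) (hP' : P'.Nonempty)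
    (BR : EuclideanSpace ℝ (Fin d) → EuclideanSpace ℝ (Fin d))
    (hBR : ∀ p, BR p ∈ P' ∧ ∀ q ∈ P', ⟪BR p, p⟫_ℝ ≤ ⟪q, p⟫_ℝ)
    (diam : ℝ) (hdiam : ∀ q ∈ P', ∀ q' ∈ P', Nstar (q - q') ≤ diam)
    (ν : EuclideanSpace ℝ (Fin d) → EuclideanSpace ℝ (Fin d))
    (hν : ∀ p ∈ S, (0 < ∑ t, x t p) →
      (∑ t, x t p) • ν p = ∑ t, x t p • y t)
    (π : EuclideanSpace ℝ (Fin d) → EuclideanSpace ℝ (Fin d))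
    (hπ : ∀ q ∈ P', π q ∈ P') :
    ∑ t, ∑ p ∈ S, x t p * ⟪y t, BR p - π (BR p)⟫_ℝ ≤
      diam * ∑ p ∈ S, (∑ t, x t p) * N (ν p - p) := by
  classical
  -- basic facts about the norm N
  have hN0 : N 0 = 0 := by simpa using hN_smul 0 0
  have hNneg : ∀ a, N (-a) = N a := by
    intro a; simpa using hN_smul (-1) a
  have hNnonneg : ∀ a, 0 ≤ N a := by
    intro a
    have h := hN_add a (-a)
    rw [add_neg_cancel, hN0, hNneg] at h
    linarith
  have hNstar_nonneg : ∀ v, 0 ≤ Nstar v := by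
    intro v
    exact (hNstar v).1 ⟨0, by simp [hN0], by simp⟩
  have hdiam0 : 0 ≤ diam := by
    obtain ⟨q, hq⟩ := hP'
    exact le_trans (hNstar_nonneg (q - q)) (hdiam q hq q hq)
  -- Hölder's inequality
  have holder : ∀ u v, ⟪u, v⟫_ℝ ≤ N u * Nstar v := by
    intro u v
    rcases eq_or_lt_of_le (hNnonneg u) with h | h
    · have hu : u = 0 := hN_def u h.symm
      calc ⟪u, v⟫_ℝ = 0 := by simp [hu]
        _ ≤ N u * Nstar v := mul_nonneg (hNnonneg u) (hNstar_nonneg v)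
    · have hs : N ((N u)⁻¹ • u) ≤ 1 := by
        rw [hN_smul, abs_of_pos (inv_pos.mpr h)]
        rw [inv_mul_cancel₀ (ne_of_gt h)]
      have hle : ⟪(N u)⁻¹ • u, v⟫_ℝ ≤ Nstar v := (hNstar v).1 ⟨(N u)⁻¹ • u, hs, rfl⟩
      have h2 : ⟪u, v⟫_ℝ = N u * ⟪(N u)⁻¹ • u, v⟫_ℝ := by
        rw [real_inner_smul_left]
        field_simp
      rw [h2]
      exact mul_le_mul_of_nonneg_left hle (le_of_lt h)
  rw [Finset.sum_comm, Finset.mul_sum]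
  apply Finset.sum_le_sum
  intro p hp
  set c := BR p - π (BR p) with hc
  have hBRmem := (hBR p).1
  have hpc : ⟪p, c⟫_ℝ ≤ 0 := by
    have h := (hBR p).2 (π (BR p)) (hπ _ hBRmem)
    have e1 := real_inner_comm p (BR p)
    have e2 := real_inner_comm p (π (BR p))
    rw [hc, inner_sub_right]
    linarith
  have hw : 0 ≤ ∑ t, x t p := Finset.sum_nonneg fun t _ => hx t p hp
  rcases eq_or_lt_of_le hw with hw0 | hwpos
  · have hz : ∀ t : Fin T, x t p = 0 := by
      intro t
      have := (Finset.sum_eq_zero_iff_of_nonneg (fun t _ => hx t p hp)).1 hw0.symm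
      exact this t (Finset.mem_univ t)
    simp [hz, ← hw0]
  · have hsum : ∑ t, x t p * ⟪y t, c⟫_ℝ = (∑ t, x t p) * ⟪ν p, c⟫_ℝ := by
      have : ∑ t, x t p * ⟪y t, c⟫_ℝ = ⟪∑ t, x t p • y t, c⟫_ℝ := by
        rw [sum_inner]
        exact Finset.sum_congr rfl fun t _ => (real_inner_smul_left _ _ _).symm
      rw [this, ← hν p hp hwpos, real_inner_smul_left]
    rw [hsum]
    have hsplit : ⟪ν p, c⟫_ℝ = ⟪ν p - p, c⟫_ℝ + ⟪p, c⟫_ℝ := by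
      rw [← inner_add_left, sub_add_cancel]
    have hH : ⟪ν p - p, c⟫_ℝ ≤ N (ν p - p) * diam := by
      calc ⟪ν p - p, c⟫_ℝ ≤ N (ν p - p) * Nstar c := holder _ _
        _ ≤ N (ν p - p) * diam :=
          mul_le_mul_of_nonneg_left (hdiam _ hBRmem _ (hπ _ hBRmem)) (hNnonneg _)
    have h1 : ⟪ν p, c⟫_ℝ ≤ N (ν p - p) * diam := by
      rw [hsplit]; linarith
    have := mul_le_mul_of_nonneg_left h1 hw
    nlinarith [hNnonneg (ν p - p)]
end
end
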